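/- Define h(y) = ln(2 − 2y) − y(2 − 3y + 2y²)·ln(1/y − 1) for y ∈ (0, 1/2]. Then h(y) ≥ 0 for all y ∈ (0, 1/2]. -/

import Mathlib

open Real Set

lemma pade_log (x : ℝ) (hx : 1 ≤ x) : 2*(x-1)/(x+1) ≤ Real.log x := by
  set f : ℝ → ℝ := fun t => Real.log t - 2*(t-1)/(t+1) with hf
  have hmono : MonotoneOn f (Ici (1:ℝ)) := by
    apply monotoneOn_of_deriv_nonneg (convex_Ici 1)
    · apply ContinuousOn.sub
      · exact Real.continuousOn_log.mono (fun t ht => by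
          simp only [mem_compl_iff, mem_singleton_iff]
          intro h; rw [h] at ht; norm_num at ht)
      · apply ContinuousOn.div (by fun_prop) (by fun_prop)
        intro t ht
        have : (1:ℝ) ≤ t := ht
        nlinarith
    · intro t ht
      rw [interior_Ici] at ht
      have ht1 : (1:ℝ) < t := ht
      have ht0 : t ≠ 0 := by linarith
      have htd : t + 1 ≠ 0 := by linarith
      have h1 : HasDerivAt Real.log t⁻¹ t := Real.hasDerivAt_log ht0
      have h2 : HasDerivAt (fun t : ℝ => 2*(t-1)/(t+1))
          ((2*(t+1) - 2*(t-1)*1)/(t+1)^2) t := by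
        have := ((((hasDerivAt_id' t)).sub_const 1).const_mul 2).div
          ((hasDerivAt_id' t).add_const 1) htd
        exact this.congr_deriv (by ring)
      exact (h1.sub h2).differentiableAt.differentiableWithinAt
    · intro t ht
      rw [interior_Ici] at ht
      have ht1 : (1:ℝ) < t := ht
      have ht0 : t ≠ 0 := by linarith
      have htd : t + 1 ≠ 0 := by linarith
      have h1 : HasDerivAt Real.log t⁻¹ t := Real.hasDerivAt_log ht0
      have h2 : HasDerivAt (fun t : ℝ => 2*(t-1)/(t+1))
          ((2*(t+1) - 2*(t-1)*1)/(t+1)^2) t := by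
        have := ((((hasDerivAt_id' t)).sub_const 1).const_mul 2).div
          ((hasDerivAt_id' t).add_const 1) htd
        exact this.congr_deriv (by ring)
      rw [show deriv f t = _ from (h1.sub h2).deriv, sub_nonneg, div_le_iff₀ (by positivity)]
      have h5 : t⁻¹ * (t+1)^2 = (t+1)^2/t := by field_simp
      rw [h5, le_div_iff₀ (by linarith)]
      nlinarith [sq_nonneg (t-1)]
  have h1 : f 1 ≤ f x := hmono (by norm_num) hx hx
  simp only [hf] at h1
  norm_num at h1
  linarith

theorem stmt8 (y : ℝ) (hy : y ∈ Set.Ioc (0:ℝ) (1/2)) :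
    0 ≤ Real.log (2 - 2 * y) - y * (2 - 3 * y + 2 * y ^ 2) * Real.log (1 / y - 1) := by
  obtain ⟨hy0, hy2⟩ := hy
  set f : ℝ → ℝ := fun y => Real.log (2 - 2 * y) - y * (2 - 3 * y + 2 * y ^ 2) * Real.log (1 / y - 1) with hf
  have hanti : AntitoneOn f (Ioc (0:ℝ) (1/2)) := by
    apply antitoneOn_of_deriv_nonpos (convex_Ioc 0 (1/2))
    · apply ContinuousOn.sub
      · apply Real.continuousOn_log.comp (by fun_prop)
        intro t ht
        simp only [mem_compl_iff, mem_singleton_iff]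
        obtain ⟨ht0, ht2⟩ := ht
        intro h; nlinarith
      · apply ContinuousOn.mul (by fun_prop)
        apply Real.continuousOn_log.comp
        · apply ContinuousOn.sub _ continuousOn_const
          apply ContinuousOn.div continuousOn_const (by fun_prop)
          intro t ht; exact ne_of_gt ht.1
        · intro t ht
          obtain ⟨ht0, ht2⟩ := ht
          simp only [mem_compl_iff, mem_singleton_iff]
          intro h
          have : 1/t ≥ 2 := by rw [ge_iff_le, le_div_iff₀ ht0]; linarith
          linarith
    · rw [interior_Ioc]
      intro x hx
      obtain ⟨hx0, hx2⟩ := hx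
      have h1 : (0:ℝ) < 2 - 2*x := by linarith
      have h2 : (1:ℝ) ≤ 1/x - 1 := by
        rw [le_sub_iff_add_le, le_div_iff₀ hx0]; linarith
      have h2' : (0:ℝ) < 1/x - 1 := by linarith
      have d1 : HasDerivAt (fun y : ℝ => Real.log (2 - 2*y)) (-2 / (2 - 2*x)) x := by
        have := (((hasDerivAt_id' x).const_mul 2).const_sub 2).log (ne_of_gt h1)
        convert this using 1 <;> ring
      have dp : HasDerivAt (fun y : ℝ => y * (2 - 3*y + 2*y^2)) (2 - 6*x + 6*x^2) x := by
        have := (hasDerivAt_id' x).mul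
          ((((hasDerivAt_id' x).const_mul 3).const_sub 2).add ((hasDerivAt_pow 2 x).const_mul 2))
        exact this.congr_deriv (by simp only [Pi.add_apply]; push_cast; ring)
      have d2 : HasDerivAt (fun y : ℝ => Real.log (1/y - 1)) ((-(x^2)⁻¹) / (1/x - 1)) x := by
        have hinv : HasDerivAt (fun y : ℝ => 1/y - 1) (-(x^2)⁻¹) x := by
          simpa [one_div] using (hasDerivAt_inv (ne_of_gt hx0)).sub_const 1
        exact hinv.log (ne_of_gt h2')
      have dtot : HasDerivAt f
          (-2 / (2 - 2*x) - ((2 - 6*x + 6*x^2) * Real.log (1/x - 1)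
            + x * (2 - 3*x + 2*x^2) * ((-(x^2)⁻¹) / (1/x - 1)))) x := by
        have := d1.sub (dp.mul d2)
        exact this
      exact dtot.differentiableAt.differentiableWithinAt
    · rw [interior_Ioc]
      intro x hx
      obtain ⟨hx0, hx2⟩ := hx
      have h1 : (0:ℝ) < 2 - 2*x := by linarith
      have h2 : (1:ℝ) ≤ 1/x - 1 := by
        rw [le_sub_iff_add_le, le_div_iff₀ hx0]; linarith
      have h2' : (0:ℝ) < 1/x - 1 := by linarith
      have d1 : HasDerivAt (fun y : ℝ => Real.log (2 - 2*y)) (-2 / (2 - 2*x)) x := by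
        have := (((hasDerivAt_id' x).const_mul 2).const_sub 2).log (ne_of_gt h1)
        convert this using 1 <;> ring
      have dp : HasDerivAt (fun y : ℝ => y * (2 - 3*y + 2*y^2)) (2 - 6*x + 6*x^2) x := by
        have := (hasDerivAt_id' x).mul
          ((((hasDerivAt_id' x).const_mul 3).const_sub 2).add ((hasDerivAt_pow 2 x).const_mul 2))
        exact this.congr_deriv (by simp only [Pi.add_apply]; push_cast; ring)
      have d2 : HasDerivAt (fun y : ℝ => Real.log (1/y - 1)) ((-(x^2)⁻¹) / (1/x - 1)) x := by
        have hinv : HasDerivAt (fun y : ℝ => 1/y - 1) (-(x^2)⁻¹) x := by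
          simpa [one_div] using (hasDerivAt_inv (ne_of_gt hx0)).sub_const 1
        exact hinv.log (ne_of_gt h2')
      have dtot : HasDerivAt f
          (-2 / (2 - 2*x) - ((2 - 6*x + 6*x^2) * Real.log (1/x - 1)
            + x * (2 - 3*x + 2*x^2) * ((-(x^2)⁻¹) / (1/x - 1)))) x := by
        have := d1.sub (dp.mul d2)
        exact this
      rw [dtot.deriv]
      -- simplify derivative to (1-2x) - (2-6x+6x^2) * L
      set L := Real.log (1/x - 1) with hL
      have hsimp : -2 / (2 - 2*x) - ((2 - 6*x + 6*x^2) * L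
            + x * (2 - 3*x + 2*x^2) * ((-(x^2)⁻¹) / (1/x - 1)))
          = (1 - 2*x) - (2 - 6*x + 6*x^2) * L := by
        have hx0' : x ≠ 0 := ne_of_gt hx0
        have hx1 : (1:ℝ) - x ≠ 0 := by intro h; rw [sub_eq_zero] at h; linarith
        have h1' : (2:ℝ) - 2*x ≠ 0 := ne_of_gt h1
        have hq : 1/x - 1 = (1-x)/x := by field_simp
        rw [hq]
        field_simp
        ring
      rw [hsimp]
      -- key bound: L ≥ 2(1-2x)
      have hLb : 2*(1-2*x) ≤ L := by
        have := pade_log (1/x - 1) h2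
        have heq : 2*((1/x-1)-1)/((1/x-1)+1) = 2*(1-2*x) := by
          field_simp
          ring
        rw [heq] at this
        exact this
      have hcoef : (0:ℝ) < 2 - 6*x + 6*x^2 := by nlinarith [sq_nonneg (2*x-1)]
      nlinarith [mul_le_mul_of_nonneg_left hLb (le_of_lt hcoef), sq_nonneg (1-2*x), sq_nonneg (2*x-1)]
  have := hanti ⟨hy0, hy2⟩ (show (1/2:ℝ) ∈ Ioc (0:ℝ) (1/2) by norm_num) hy2
  have hval : f (1/2) = 0 := by
    simp only [hf]
    norm_num
  rw [hval] at this
  exact this
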